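/- There exists an absolute constant C > 0 such that for every probability mass function p on ℕ and every n ∈ ℕ, |E[Z_n] − μ(n)| ≤ C, where E[Z_n] = ∑_j (1 − (1 − p_j)^n). -/

import Mathlib

open MeasureTheory ProbabilityTheory Real


lemma aux_exp_quad {x : ℝ} (hx : 0 ≤ x) : Real.exp (-x) ≤ 1 - x + x ^ 2 := by
  have h1 : 1 + x ≤ Real.exp x := by linarith [Real.add_one_le_exp x]
  have h3 : Real.exp (-x) * Real.exp x = 1 := by rw [← Real.exp_add]; simp
  have h2 := Real.exp_pos x
  have h4 : (0:ℝ) ≤ 1 - x + x ^ 2 := by nlinarith [sq_nonneg (x - 1)]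
  nlinarith [mul_le_mul_of_nonneg_left h1 h4, mul_nonneg (mul_nonneg hx hx) hx]

lemma aux_xexp {x : ℝ} (hx : 0 ≤ x) : x * Real.exp (-x) ≤ 1 := by
  have h1 : x ≤ Real.exp x := by linarith [Real.add_one_le_exp x]
  rw [Real.exp_neg]
  calc x * (Real.exp x)⁻¹ ≤ Real.exp x * (Real.exp x)⁻¹ :=
        mul_le_mul_of_nonneg_right h1 (inv_nonneg.2 (Real.exp_pos x).le)
    _ = 1 := mul_inv_cancel₀ (Real.exp_pos x).ne'

lemma aux_pow_sub_pow {a b : ℝ} (hb : 0 ≤ b) (hba : b ≤ a) (n : ℕ) :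
    a ^ n - b ^ n ≤ n * a ^ (n - 1) * (a - b) := by
  have ha : 0 ≤ a := le_trans hb hba
  rw [← geom_sum₂_mul]
  apply mul_le_mul_of_nonneg_right _ (by linarith)
  calc ∑ i ∈ Finset.range n, a ^ i * b ^ (n - 1 - i)
      ≤ ∑ i ∈ Finset.range n, a ^ (n - 1) := by
        apply Finset.sum_le_sum
        intro i hi
        have hin : i + (n - 1 - i) = n - 1 := by
          have := Finset.mem_range.mp hi; omega
        calc a ^ i * b ^ (n - 1 - i) ≤ a ^ i * a ^ (n - 1 - i) :=
              mul_le_mul_of_nonneg_left (pow_le_pow_left₀ hb hba _) (pow_nonneg ha i)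
          _ = a ^ (n - 1) := by rw [← pow_add, hin]
    _ = n * a ^ (n - 1) := by rw [Finset.sum_const, Finset.card_range, nsmul_eq_mul]

lemma aux_term_bound {p : ℝ} (hp0 : 0 ≤ p) (hp1 : p ≤ 1) (n : ℕ) :
    Real.exp (-(p * n)) - (1 - p) ^ n ≤ 2 * p := by
  cases n with
  | zero => simp; linarith
  | succ m =>
    set a := Real.exp (-p) with ha
    have hb0 : (0:ℝ) ≤ 1 - p := by linarith
    have hba : 1 - p ≤ a := by have := Real.add_one_le_exp (-p); linarith
    have hA : Real.exp (-(p * (m + 1 : ℕ))) = a ^ (m + 1) := by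
      rw [ha, ← Real.exp_nat_mul]; ring_nf
    have ham : a ^ m = Real.exp (-(p * m)) := by
      rw [ha, ← Real.exp_nat_mul]; ring_nf
    have key := aux_pow_sub_pow hb0 hba (m + 1)
    simp only [Nat.add_sub_cancel] at key
    have hq : a - (1 - p) ≤ p ^ 2 := by
      have := aux_exp_quad hp0; rw [← ha] at this; linarith
    have hE1 : Real.exp (-(p * m)) ≤ 1 := by
      rw [Real.exp_le_one_iff]
      have : (0:ℝ) ≤ p * m := mul_nonneg hp0 (Nat.cast_nonneg m)
      linarith
    have hE0 : (0:ℝ) < Real.exp (-(p * m)) := Real.exp_pos _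
    have hx : p * m * Real.exp (-(p * m)) ≤ 1 := aux_xexp (mul_nonneg hp0 (Nat.cast_nonneg m))
    rw [hA]
    have step2 : ((m + 1 : ℕ) : ℝ) * a ^ m * (a - (1 - p)) ≤ ((m:ℝ) + 1) * Real.exp (-(p * m)) * p ^ 2 := by
      rw [ham]
      push_cast
      apply mul_le_mul_of_nonneg_left hq (by positivity)
    have key2 : a ^ (m + 1) - (1 - p) ^ (m + 1) ≤ ((m:ℝ) + 1) * Real.exp (-(p * m)) * p ^ 2 :=
      le_trans key step2
    nlinarith [mul_nonneg hp0 hp0, hE0.le]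

/-- the mean of the number of distinct values satisfies
`E[Z_n] = μ(n) + O(1)` with an absolute constant, where `μ(x) = ∑_j (1 − e^{−p_j x})`
and `E[Z_n] = ∑_j (1 − (1 − p_j)^n)`. -/
theorem mean_distinct_values_approx :
    ∃ C : ℝ, 0 < C ∧
      ∀ (Ω : Type) (_ : MeasurableSpace Ω) (μ : Measure Ω), IsProbabilityMeasure μ →
      ∀ (p : ℕ → ℝ), (∀ j, 0 ≤ p j) → (∑' j, p j) = 1 →
      ∀ (n : ℕ) (X : Fin n → Ω → ℕ), (∀ i, Measurable (X i)) →
      iIndepFun X μ →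
      (∀ i j, μ {ω | X i ω = j} = ENNReal.ofReal (p j)) →
      |(∫ ω, ((Finset.univ.image (fun i => X i ω)).card : ℝ) ∂μ)
          - ∑' j, (1 - Real.exp (-(p j) * n))| ≤ C := by
  refine ⟨2, by norm_num, ?_⟩
  intro Ω mΩ μ hμ p hp hsum n X hX hind hdist
  -- summability and p j ≤ 1
  have hsummable : Summable p := by
    by_contra h
    rw [tsum_eq_zero_of_not_summable h] at hsum
    norm_num at hsum
  have hple : ∀ j, p j ≤ 1 := by
    intro j
    calc p j ≤ ∑' k, p k := Summable.le_tsum hsummable j (fun k _ => hp k)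
      _ = 1 := hsum
  have hb0 : ∀ j, (0:ℝ) ≤ 1 - p j := fun j => by linarith [hple j]
  -- events
  set A : ℕ → Set Ω := fun j => ⋃ i, X i ⁻¹' {j} with hAdef
  have hAmeas : ∀ j, MeasurableSet (A j) :=
    fun j => MeasurableSet.iUnion fun i => (hX i) (measurableSet_singleton j)
  -- complement probability
  have hcompl : ∀ j, μ (A j)ᶜ = ENNReal.ofReal ((1 - p j) ^ n) := by
    intro j
    have h0 : (A j)ᶜ = ⋂ i ∈ Finset.univ, X i ⁻¹' ({j}ᶜ) := by
      simp [hAdef, Set.compl_iUnion]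
    rw [h0, (iIndepFun_iff_measure_inter_preimage_eq_mul.mp hind) Finset.univ
      (fun i _ => (measurableSet_singleton j).compl)]
    have h2 : ∀ i : Fin n, μ (X i ⁻¹' ({j}ᶜ)) = ENNReal.ofReal (1 - p j) := by
      intro i
      have hpre : μ (X i ⁻¹' {j}) = ENNReal.ofReal (p j) := by
        rw [← hdist i j]; rfl
      rw [Set.preimage_compl, measure_compl ((hX i) (measurableSet_singleton j))
        (measure_ne_top μ _), hpre, measure_univ, ← ENNReal.ofReal_one,
        ← ENNReal.ofReal_sub _ (hp j)]
    rw [Finset.prod_congr rfl (fun i _ => h2 i), Finset.prod_const, Finset.card_univ,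
      Fintype.card_fin, ← ENNReal.ofReal_pow (hb0 j)]
  have hA : ∀ j, μ (A j) = ENNReal.ofReal (1 - (1 - p j) ^ n) := by
    intro j
    rw [← compl_compl (A j), prob_compl_eq_one_sub (hAmeas j).compl, hcompl j,
      ← ENNReal.ofReal_one, ← ENNReal.ofReal_sub _ (pow_nonneg (hb0 j) n)]
  have hpow_le_one : ∀ j, (1 - p j) ^ n ≤ 1 := fun j => pow_le_one₀ (hb0 j) (by linarith [hp j])
  -- integral of each indicator
  have hint : ∀ j, ∫ ω, Set.indicator (A j) (fun _ => (1:ℝ)) ω ∂μ = 1 - (1 - p j) ^ n := by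
    intro j
    have : (fun _ => (1:ℝ)) = (1 : Ω → ℝ) := rfl
    rw [this, integral_indicator_one (hAmeas j), measureReal_def, hA j,
      ENNReal.toReal_ofReal (by linarith [hpow_le_one j])]
  -- pointwise identity
  have hpt : ∀ ω, ((Finset.univ.image (fun i => X i ω)).card : ℝ)
      = ∑' j, Set.indicator (A j) (fun _ => (1:ℝ)) ω := by
    intro ω
    have key : ∀ j, Set.indicator (A j) (fun _ => (1:ℝ)) ω
        = if j ∈ Finset.univ.image (fun i => X i ω) then (1:ℝ) else 0 := by
      intro j
      by_cases h : j ∈ Finset.univ.image (fun i => X i ω)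
      · rw [if_pos h, Set.indicator_of_mem]
        obtain ⟨i, _, hi⟩ := Finset.mem_image.mp h
        exact Set.mem_iUnion.2 ⟨i, by simp [hi]⟩
      · rw [if_neg h, Set.indicator_of_notMem]
        intro hc
        obtain ⟨i, hi⟩ := Set.mem_iUnion.mp hc
        exact h (Finset.mem_image.mpr ⟨i, Finset.mem_univ i, by simpa using hi⟩)
    simp_rw [key]
    rw [tsum_eq_sum (s := Finset.univ.image (fun i => X i ω)) (fun j hj => if_neg hj)]
    rw [Finset.sum_congr rfl (fun j hj => if_pos hj), Finset.sum_const, nsmul_eq_mul, mul_one]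
  -- swap integral and sum
  have hbound : ∀ j, 1 - (1 - p j) ^ n ≤ n * p j := by
    intro j
    have := one_add_mul_le_pow (a := -(p j)) (by linarith [hple j]) n
    have h' : 1 + (n:ℝ) * (-(p j)) ≤ (1 - p j) ^ n := by
      simpa [sub_eq_add_neg] using this
    linarith
  have hswap : ∫ ω, (∑' j, Set.indicator (A j) (fun _ => (1:ℝ)) ω) ∂μ
      = ∑' j, ∫ ω, Set.indicator (A j) (fun _ => (1:ℝ)) ω ∂μ := by
    apply integral_tsum
    · intro j
      exact (measurable_one.indicator (hAmeas j)).aestronglyMeasurable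
    · have heq : ∀ j, ∫⁻ ω, ‖Set.indicator (A j) (fun _ => (1:ℝ)) ω‖₊ ∂μ = μ (A j) := by
        intro j
        have h1 : ∫⁻ ω, (‖Set.indicator (A j) (fun _ => (1:ℝ)) ω‖₊ : ENNReal) ∂μ
            = ∫⁻ ω, Set.indicator (A j) (fun _ => (1:ENNReal)) ω ∂μ :=
          lintegral_congr (fun ω => by by_cases h : ω ∈ A j <;> simp [h])
        rw [h1, lintegral_indicator (hAmeas j)]; simp
      have heq2 : ∑' (j : ℕ), ∫⁻ (a : Ω), ‖Set.indicator (A j) (fun _ => (1:ℝ)) a‖ₑ ∂μ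
          = ∑' j, μ (A j) := tsum_congr heq
      rw [heq2]
      have hle : ∑' j, μ (A j) ≤ ∑' j, ENNReal.ofReal ((n:ℝ) * p j) := by
        apply ENNReal.tsum_le_tsum
        intro j
        rw [hA j]
        exact ENNReal.ofReal_le_ofReal (by linarith [hbound j])
      have hsum2 : ∑' (j : ℕ), ENNReal.ofReal ((n : ℝ) * p j) = ENNReal.ofReal n := by
        rw [← ENNReal.ofReal_tsum_of_nonneg (fun j => mul_nonneg (Nat.cast_nonneg n) (hp j))
          (hsummable.mul_left _), tsum_mul_left, hsum, mul_one]
      exact ne_top_of_le_ne_top (by rw [hsum2]; exact ENNReal.ofReal_ne_top) hle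
  have hmean : ∫ ω, ((Finset.univ.image (fun i => X i ω)).card : ℝ) ∂μ
      = ∑' j, (1 - (1 - p j) ^ n) := by
    simp_rw [hpt]
    rw [hswap]
    exact tsum_congr hint
  rw [hmean]
  -- final estimate
  have hs1 : Summable (fun j => 1 - (1 - p j) ^ n) := by
    apply Summable.of_nonneg_of_le (fun j => by linarith [hpow_le_one j]) hbound
    exact hsummable.mul_left _
  have hexp_le_one : ∀ j, Real.exp (-(p j) * n) ≤ 1 := by
    intro j
    rw [Real.exp_le_one_iff]
    have : (0:ℝ) ≤ p j * n := mul_nonneg (hp j) (Nat.cast_nonneg n)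
    nlinarith
  have hexp_bnd : ∀ j, 1 - Real.exp (-(p j) * n) ≤ n * p j := by
    intro j
    have := Real.add_one_le_exp (-(p j) * n)
    nlinarith
  have hs2 : Summable (fun j => 1 - Real.exp (-(p j) * n)) := by
    apply Summable.of_nonneg_of_le (fun j => by linarith [hexp_le_one j]) hexp_bnd
    exact hsummable.mul_left _
  rw [← Summable.tsum_sub hs1 hs2]
  have hterm : ∀ j, (1 - (1 - p j) ^ n) - (1 - Real.exp (-(p j) * n))
      = Real.exp (-(p j * n)) - (1 - p j) ^ n := by
    intro j; rw [neg_mul]; ring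
  have hterm_nonneg : ∀ j, 0 ≤ (1 - (1 - p j) ^ n) - (1 - Real.exp (-(p j) * n)) := by
    intro j
    rw [hterm j]
    have h1 : (1 - p j) ^ n ≤ Real.exp (-(p j)) ^ n := by
      apply pow_le_pow_left₀ (hb0 j)
      linarith [Real.add_one_le_exp (-(p j))]
    rw [← Real.exp_nat_mul] at h1
    have : (n:ℝ) * -(p j) = -(p j * n) := by ring
    rw [this] at h1
    linarith
  have hterm_le : ∀ j, (1 - (1 - p j) ^ n) - (1 - Real.exp (-(p j) * n)) ≤ 2 * p j := by
    intro j
    rw [hterm j]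
    exact aux_term_bound (hp j) (hple j) n
  have hd : Summable (fun j => (1 - (1 - p j) ^ n) - (1 - Real.exp (-(p j) * n))) :=
    hs1.sub hs2
  rw [abs_of_nonneg (tsum_nonneg hterm_nonneg)]
  calc ∑' j, ((1 - (1 - p j) ^ n) - (1 - Real.exp (-(p j) * n)))
      ≤ ∑' j, 2 * p j := Summable.tsum_le_tsum hterm_le hd (hsummable.mul_left 2)
    _ = 2 := by rw [tsum_mul_left, hsum, mul_one]
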